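/- Let a, b, c, d be integers with a ≠ 0 and c ≠ 0, and set f(x) = a*x + b and g(x) = c*x + d. If gcd(a, b, c, d) = 1 and a*d ≠ b*c, then liminf_{N → ∞} (1/(2N+1)) * |{x ∈ ℤ : -N ≤ x ≤ N and gcd(f(x), g(x)) = 1}| > 0. -/

import Mathlib

open Filter Finset

/-- goodness is invariant mod p -/
private lemma good_inv (a b c d : ℤ) (p : ℕ) (x y : ℤ) (h : (p:ℤ) ∣ y - x)
    (hg : ¬((p:ℤ) ∣ a*x+b ∧ (p:ℤ) ∣ c*x+d)) :
    ¬((p:ℤ) ∣ a*y+b ∧ (p:ℤ) ∣ c*y+d) := by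
  rintro ⟨h1, h2⟩
  refine hg ⟨?_, ?_⟩
  · have : a*x+b = (a*y+b) - a*(y-x) := by ring
    rw [this]; exact dvd_sub h1 (Dvd.dvd.mul_left h a)
  · have : c*x+d = (c*y+d) - c*(y-x) := by ring
    rw [this]; exact dvd_sub h2 (Dvd.dvd.mul_left h c)

private lemma exists_good_res (a b c d : ℤ)
    (hgcd : Int.gcd a (Int.gcd b (Int.gcd c d)) = 1) (p : ℕ) (hp : p.Prime) :
    ∃ u : ZMod p, ¬((a:ZMod p) * u + b = 0 ∧ (c:ZMod p) * u + d = 0) := by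
  by_contra h
  push_neg at h
  have h0 := h 0
  have h1 := h 1
  simp only [mul_zero, zero_add, mul_one] at h0 h1
  have hb : (b : ZMod p) = 0 := h0.1
  have hd : (d : ZMod p) = 0 := h0.2
  have ha : (a : ZMod p) = 0 := by
    have := h1.1; rw [hb, add_zero] at this; exact this
  have hc : (c : ZMod p) = 0 := by
    have := h1.2; rw [hd, add_zero] at this; exact this
  rw [ZMod.intCast_zmod_eq_zero_iff_dvd] at ha hb hc hd
  have : (p:ℤ) ∣ (Int.gcd a (Int.gcd b (Int.gcd c d)) : ℤ) :=
    Int.dvd_coe_gcd ha (Int.dvd_coe_gcd hb (Int.dvd_coe_gcd hc hd))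
  rw [hgcd] at this
  have : p ∣ 1 := by exact_mod_cast this
  exact hp.ne_one (Nat.dvd_one.mp this)

private lemma exists_good (a b c d : ℤ)
    (hgcd : Int.gcd a (Int.gcd b (Int.gcd c d)) = 1) :
    ∀ m : ℕ, 0 < m → ∃ x0 : ℤ, ∀ p : ℕ, p.Prime → p ∣ m →
      ¬((p:ℤ) ∣ a*x0+b ∧ (p:ℤ) ∣ c*x0+d) := by
  intro m
  induction m using Nat.strong_induction_on with
  | _ m ih =>
    intro hm
    rcases eq_or_lt_of_le (show 1 ≤ m by omega) with h1 | h2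
    · exact ⟨0, fun p hp hpm => absurd (Nat.dvd_one.mp (by rwa [← h1] at hpm)) hp.ne_one⟩
    · -- m ≥ 2
      set q := m.minFac with hq_def
      have hq : q.Prime := Nat.minFac_prime (by omega)
      haveI : Fact q.Prime := ⟨hq⟩
      have hqm : q ∣ m := Nat.minFac_dvd m
      set m' := ordCompl[q] m with hm'_def
      have hm'_dvd : m' ∣ m := Nat.ordCompl_dvd m q
      have hm'_pos : 0 < m' := Nat.ordCompl_pos q (by omega)
      have hq_not : ¬ q ∣ m' := Nat.not_dvd_ordCompl hq (by omega)
      have hm'_lt : m' < m := by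
        rcases lt_or_eq_of_le (Nat.le_of_dvd (by omega) hm'_dvd) with h | h
        · exact h
        · exact absurd (h ▸ hqm) hq_not
      obtain ⟨x0, hx0⟩ := ih m' hm'_lt hm'_pos
      obtain ⟨u, hu⟩ := exists_good_res a b c d hgcd q hq
      have hm'q : (m' : ZMod q) ≠ 0 := by
        rw [Ne, ZMod.natCast_eq_zero_iff]; exact hq_not
      set t : ZMod q := (u - (x0 : ZMod q)) * (m' : ZMod q)⁻¹ with ht_def
      set x1 : ℤ := x0 + (m' : ℤ) * (t.val : ℤ) with hx1_def
      have hx1_cast : (x1 : ZMod q) = u := by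
        have hval : ((t.val : ℕ) : ZMod q) = t := by
          rw [ZMod.natCast_val, ZMod.cast_id]
        push_cast [hx1_def]
        rw [hval, ht_def]
        field_simp
        ring
      refine ⟨x1, fun p hp hpm => ?_⟩
      have hsplit : p ∣ q ^ (m.factorization q) * m' := by
        rw [Nat.ordProj_mul_ordCompl_eq_self]; exact hpm
      rcases (Nat.Prime.dvd_mul hp).mp hsplit with hcase | hcase
      · -- p = q
        have hpq : p = q := (Nat.prime_dvd_prime_iff_eq hp hq).mp (hp.dvd_of_dvd_pow hcase)
        subst hpq
        rintro ⟨hd1, hd2⟩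
        rw [← ZMod.intCast_zmod_eq_zero_iff_dvd] at hd1 hd2
        push_cast at hd1 hd2
        rw [hx1_cast] at hd1 hd2
        exact hu ⟨hd1, hd2⟩
      · -- p ∣ m'
        have heq : x1 - x0 = (m':ℤ) * (t.val : ℤ) := by rw [hx1_def]; ring
        have : (p:ℤ) ∣ x1 - x0 :=
          heq ▸ Dvd.dvd.mul_right (Int.natCast_dvd_natCast.mpr hcase) _
        exact good_inv a b c d p x0 x1 this (hx0 p hp hcase)

private lemma key_ap (a b c d : ℤ) (ha : a ≠ 0) (hc : c ≠ 0)
    (hgcd : Int.gcd a (Int.gcd b (Int.gcd c d)) = 1) (hdet : a * d ≠ b * c) :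
    ∃ x0 : ℤ, ∃ T : ℕ, 0 < T ∧
      ∀ k : ℤ, Int.gcd (a*(x0+k*T)+b) (c*(x0+k*T)+d) = 1 := by
  set T := (a*d - b*c).natAbs with hT_def
  have hT : 0 < T := Int.natAbs_pos.mpr (sub_ne_zero.mpr hdet)
  obtain ⟨x0, hx0⟩ := exists_good a b c d hgcd T hT
  refine ⟨x0, T, hT, fun k => ?_⟩
  set x := x0 + k*(T:ℤ) with hx_def
  by_contra hne
  set e := Int.gcd (a*x+b) (c*x+d) with he_def
  set p := e.minFac with hp_def
  have hp : p.Prime := Nat.minFac_prime hne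
  have hpe : p ∣ e := Nat.minFac_dvd e
  have hd1 : (p:ℤ) ∣ a*x+b := dvd_trans (Int.natCast_dvd_natCast.mpr hpe) (Int.gcd_dvd_left _ _)
  have hd2 : (p:ℤ) ∣ c*x+d := dvd_trans (Int.natCast_dvd_natCast.mpr hpe) (Int.gcd_dvd_right _ _)
  have hdD : (p:ℤ) ∣ (a*d - b*c) := by
    have : a*d - b*c = a*(c*x+d) - c*(a*x+b) := by ring
    rw [this]
    exact dvd_sub (Dvd.dvd.mul_left hd2 a) (Dvd.dvd.mul_left hd1 c)
  have hpT : p ∣ T := by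
    rw [hT_def]
    exact Int.natCast_dvd_natCast.mp (Int.dvd_natAbs.mpr hdD)
  have hdx : (p:ℤ) ∣ x - x0 := by
    have heq : x - x0 = k * (T:ℤ) := by rw [hx_def]; ring
    exact heq ▸ Dvd.dvd.mul_left (Int.natCast_dvd_natCast.mpr hpT) k
  exact good_inv a b c d p x0 x hdx (hx0 p hp hpT) ⟨hd1, hd2⟩

/-- Sufficiency: if `gcd(a,b,c,d) = 1` and `a*d ≠ b*c`, the lower asymptotic
density of `x` with `gcd(a*x+b, c*x+d) = 1` over `[-N, N]` is positive. -/
theorem stmt_1 (a b c d : ℤ) (ha : a ≠ 0) (hc : c ≠ 0)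
    (hgcd : Int.gcd a (Int.gcd b (Int.gcd c d)) = 1) (hdet : a * d ≠ b * c) :
    0 < Filter.liminf (fun N : ℕ =>
        (((Finset.Icc (-(N : ℤ)) (N : ℤ)).filter
          (fun x => Int.gcd (a * x + b) (c * x + d) = 1)).card : ℝ) / (2 * N + 1))
      Filter.atTop := by
  obtain ⟨x0, T, hT, hAP⟩ := key_ap a b c d ha hc hgcd hdet
  set u : ℕ → ℝ := fun N =>
      (((Finset.Icc (-(N : ℤ)) (N : ℤ)).filter
        (fun x => Int.gcd (a * x + b) (c * x + d) = 1)).card : ℝ) / (2 * N + 1) with hu_def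
  set A : ℕ := x0.natAbs with hA_def
  have hTR : (0:ℝ) < (T:ℝ) := by exact_mod_cast hT
  have hεpos : (0:ℝ) < 1/(4*(T:ℝ)) := by positivity
  have hev : ∀ᶠ N in atTop, 1/(4*(T:ℝ)) ≤ u N := by
    rw [eventually_atTop]
    refine ⟨2*A+1, fun N hN => ?_⟩
    set K : ℤ := ((N:ℤ) - A) / T with hK_def
    have hNA : (A:ℤ) ≤ (N:ℤ) := by exact_mod_cast le_trans (by omega) hN
    have hK0 : 0 ≤ K := Int.ediv_nonneg (by omega) (by positivity)
    have hKT : K * T ≤ (N:ℤ) - A := Int.ediv_mul_le _ (by positivity)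
    have hlt : (N:ℤ) - A < (K + 1) * T := Int.lt_ediv_add_one_mul_self _ (by exact_mod_cast hT)
    -- injection
    have hmem : ∀ k ∈ Finset.Icc (0:ℤ) K, x0 + k*T ∈
        (Finset.Icc (-(N : ℤ)) (N : ℤ)).filter
          (fun x => Int.gcd (a * x + b) (c * x + d) = 1) := by
      intro k hk
      rw [Finset.mem_Icc] at hk
      have h1 : 0 ≤ k * T := mul_nonneg hk.1 (by positivity)
      have h2 : k * T ≤ (N:ℤ) - A :=
        le_trans (mul_le_mul_of_nonneg_right hk.2 (by positivity)) hKT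
      rw [Finset.mem_filter, Finset.mem_Icc]
      refine ⟨⟨?_, ?_⟩, hAP k⟩ <;> omega
    have hinj : Set.InjOn (fun k : ℤ => x0 + k*T) (Finset.Icc (0:ℤ) K) := by
      intro k1 _ k2 _ h
      simp only at h
      have : k1 * (T:ℤ) = k2 * T := by linarith
      exact mul_right_cancel₀ (by exact_mod_cast hT.ne' : (T:ℤ) ≠ 0) this
    have hcard_nat : (Finset.Icc (0:ℤ) K).card ≤
        ((Finset.Icc (-(N : ℤ)) (N : ℤ)).filter
          (fun x => Int.gcd (a * x + b) (c * x + d) = 1)).card :=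
      Finset.card_le_card_of_injOn _ hmem hinj
    rw [Int.card_Icc] at hcard_nat
    have hcardR : ((K:ℝ) + 1) ≤
        (((Finset.Icc (-(N : ℤ)) (N : ℤ)).filter
          (fun x => Int.gcd (a * x + b) (c * x + d) = 1)).card : ℝ) := by
      have h1 : ((K + 1 - 0).toNat : ℤ) = K + 1 := by omega
      have h2 : (((K + 1 - 0).toNat : ℕ) : ℝ) = (K:ℝ) + 1 := by
        exact_mod_cast congrArg (fun z : ℤ => (z : ℝ)) h1
      rw [← h2]
      exact_mod_cast hcard_nat
    have hZ : (2*(N:ℤ)+1) ≤ 4*(T:ℤ)*(K+1) := by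
      have hNge : (2*(A:ℤ)+1) ≤ (N:ℤ) := by exact_mod_cast hN
      nlinarith [hlt, hT.le, hNge, hK0]
    show 1/(4*(T:ℝ)) ≤ _ / (2 * (N:ℝ) + 1)
    rw [le_div_iff₀ (by positivity : (0:ℝ) < 2*(N:ℝ)+1)]
    calc 1/(4*(T:ℝ)) * (2*(N:ℝ)+1) ≤ (K:ℝ)+1 := by
          rw [div_mul_eq_mul_div, one_mul, div_le_iff₀ (by positivity : (0:ℝ) < 4*(T:ℝ))]
          have : ((2*(N:ℤ)+1 : ℤ) : ℝ) ≤ ((4*(T:ℤ)*(K+1) : ℤ) : ℝ) := by exact_mod_cast hZ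
          push_cast at this
          linarith
      _ ≤ _ := hcardR
  have hub : ∀ N : ℕ, u N ≤ 1 := by
    intro N
    rw [hu_def]
    simp only
    rw [div_le_one (by positivity)]
    have h1 : ((Finset.Icc (-(N : ℤ)) (N : ℤ)).filter
          (fun x => Int.gcd (a * x + b) (c * x + d) = 1)).card ≤
        (Finset.Icc (-(N : ℤ)) (N : ℤ)).card := Finset.card_filter_le _ _
    rw [Int.card_Icc] at h1
    have h2' : ((N:ℤ) + 1 - -(N:ℤ)).toNat = 2*N+1 := by omega
    rw [h2'] at h1
    calc (_ : ℝ) ≤ ((2*N+1 : ℕ) : ℝ) := by exact_mod_cast h1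
      _ ≤ 2*(N:ℝ)+1 := by push_cast; linarith
  exact lt_of_lt_of_le hεpos
    (le_liminf_of_le (isCoboundedUnder_ge_of_eventually_le _ (Eventually.of_forall hub)) hev)
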